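/- (Lemma 3) Let T₁, T₂, T₁', T₂', λ₁, λ₂, λ₁', λ₂' > 0 with T₂ ≥ T₁, T₂' ≥ T₁', and λ₁/T₁ = λ₂/T₂ > λ₁'/T₁' = λ₂'/T₂'. Let m₀ = ln(T₁'λ₁/(T₁λ₁')) / (1 + T₁'/T₁) and define T(m,t,t₁,t₁') = e^{t₁(−λ₁ + λ₂ + λ₁ e^{−m T₁'/T₁} − λ₂ e^{−m T₁'/T₂})} · e^{t₁'(λ₁' e^m − λ₂' e^{m T₁'/T₂'} − λ₁' + λ₂')} · e^{t(λ₂' e^{m T₁'/T₂'} − λ₂ − λ₂' + λ₂ e^{−m T₁'/T₂})}. Then for any fixed t₁ ≥ 0 and t₁' ≥ 0, T(m₀,t,t₁,t₁') tends to 0 as t → ∞. -/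

import Mathlib

open Real Filter Topology

set_option maxHeartbeats 800000

/-- Lemma 3: Let `T₁, T₂, T₁', T₂', λ₁, λ₂, λ₁', λ₂' > 0` with `T₂ ≥ T₁`,
`T₂' ≥ T₁'`, and `λ₁/T₁ = λ₂/T₂ > λ₁'/T₁' = λ₂'/T₂'`. Let
`m₀ = ln(T₁' λ₁ / (T₁ λ₁')) / (1 + T₁'/T₁)` and let `T(m,t,t₁,t₁')` be the product of
exponentials defined in the LightSync security analysis. Then for any fixed `t₁ ≥ 0` and
`t₁' ≥ 0`, `T(m₀,t,t₁,t₁') → 0` as `t → ∞`. -/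
theorem lemma3_T_tendsto_zero (T₁ T₂ T₁' T₂' lam₁ lam₂ lam₁' lam₂' : ℝ)
    (hT₁ : 0 < T₁) (hT₂ : 0 < T₂) (hT₁' : 0 < T₁') (hT₂' : 0 < T₂')
    (hlam₁ : 0 < lam₁) (hlam₂ : 0 < lam₂) (hlam₁' : 0 < lam₁') (hlam₂' : 0 < lam₂')
    (hT : T₁ ≤ T₂) (hT' : T₁' ≤ T₂')
    (hrate : lam₁ / T₁ = lam₂ / T₂) (hrate' : lam₁' / T₁' = lam₂' / T₂')
    (hlt : lam₁' / T₁' < lam₁ / T₁)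
    (m₀ : ℝ) (hm₀ : m₀ = Real.log (T₁' * lam₁ / (T₁ * lam₁')) / (1 + T₁' / T₁))
    (Tf : ℝ → ℝ → ℝ → ℝ → ℝ)
    (hTf : ∀ m t t₁ t₁', Tf m t t₁ t₁' =
      Real.exp (t₁ * (-lam₁ + lam₂ + lam₁ * Real.exp (-m * (T₁' / T₁)) -
          lam₂ * Real.exp (-m * (T₁' / T₂)))) *
        Real.exp (t₁' * (lam₁' * Real.exp m - lam₂' * Real.exp (m * (T₁' / T₂')) -
          lam₁' + lam₂')) *
        Real.exp (t * (lam₂' * Real.exp (m * (T₁' / T₂')) - lam₂ - lam₂' +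
          lam₂ * Real.exp (-m * (T₁' / T₂)))))
    (t₁ t₁' : ℝ) (ht₁ : 0 ≤ t₁) (ht₁' : 0 ≤ t₁') :
    Tendsto (fun t => Tf m₀ t t₁ t₁') atTop (𝓝 0) := by
  set a : ℝ := T₁' / T₂' with ha
  set b : ℝ := T₁' / T₂ with hb
  have ha0 : 0 < a := div_pos hT₁' hT₂'
  have hb0 : 0 < b := div_pos hT₁' hT₂
  have ha1 : a ≤ 1 := (div_le_one hT₂').mpr hT'
  have hbq : b ≤ T₁' / T₁ := div_le_div_of_nonneg_left hT₁'.le hT₁ hT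
  have hq0 : 0 < T₁' / T₁ := div_pos hT₁' hT₁
  -- ratio r > 1
  have hr1 : 1 < T₁' * lam₁ / (T₁ * lam₁') := by
    rw [lt_div_iff₀ (by positivity)]
    rw [div_lt_div_iff₀ hT₁' hT₁] at hlt
    nlinarith
  have hd0 : 0 < 1 + T₁' / T₁ := by positivity
  have hm₀pos : 0 < m₀ := by
    rw [hm₀]
    exact div_pos (Real.log_pos hr1) hd0
  -- key identity: lam₁'/T₁' * exp m₀ = lam₁/T₁ * exp (-m₀ * (T₁'/T₁))
  have hkey : lam₁' / T₁' * Real.exp m₀ = lam₁ / T₁ * Real.exp (-m₀ * (T₁' / T₁)) := by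
    have hexp : Real.exp (m₀ * (1 + T₁' / T₁)) = T₁' * lam₁ / (T₁ * lam₁') := by
      rw [hm₀, div_mul_cancel₀ _ hd0.ne', Real.exp_log (by positivity)]
    have h1 : Real.exp m₀ * Real.exp (m₀ * (T₁' / T₁)) = T₁' * lam₁ / (T₁ * lam₁') := by
      rw [← Real.exp_add, ← hexp]; ring_nf
    have h2 : Real.exp (-m₀ * (T₁' / T₁)) = (Real.exp (m₀ * (T₁' / T₁)))⁻¹ := by
      rw [← Real.exp_neg]; ring_nf
    rw [h2]
    have hE : Real.exp (T₁' * m₀ / T₁) = Real.exp (m₀ * (T₁' / T₁)) := by congr 1; ring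
    field_simp
    rw [hE]
    rw [eq_div_iff (by positivity)] at h1
    linear_combination h1
  -- function f and its derivative
  set f : ℝ → ℝ := fun m => lam₂' * Real.exp (m * a) + lam₂ * Real.exp (-m * b) - lam₂ - lam₂'
    with hf
  have hder : ∀ m : ℝ, HasDerivAt f
      (lam₂' * (Real.exp (m * a) * a) + lam₂ * (Real.exp (-m * b) * (-b))) m := by
    intro m
    have h1 : HasDerivAt (fun m : ℝ => Real.exp (m * a)) (Real.exp (m * a) * a) m :=
      (hasDerivAt_mul_const a).exp
    have h2 : HasDerivAt (fun m : ℝ => Real.exp (-m * b)) (Real.exp (-m * b) * (-b)) m := by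
      have := ((hasDerivAt_mul_const b).neg).exp (x := m)
      simpa [neg_mul] using this
    exact (((h1.const_mul lam₂').add (h2.const_mul lam₂)).sub_const lam₂).sub_const lam₂'
  -- coefficients
  have hca : lam₂' * a = T₁' * (lam₁' / T₁') := by
    rw [hrate', ha]; ring
  have hcb : lam₂ * b = T₁' * (lam₁ / T₁) := by
    rw [hrate, hb]; ring
  -- derivative negative on (0, m₀)
  have hderiv_neg : ∀ m ∈ Set.Ioo (0:ℝ) m₀, deriv f m < 0 := by
    intro m hm
    obtain ⟨hm0, hmlt⟩ := hm
    rw [(hder m).deriv]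
    have e1 : lam₁' / T₁' * Real.exp (m * a) ≤ lam₁' / T₁' * Real.exp m := by
      apply mul_le_mul_of_nonneg_left _ (by positivity)
      exact Real.exp_le_exp.mpr (by nlinarith)
    have e2 : lam₁' / T₁' * Real.exp m < lam₁' / T₁' * Real.exp m₀ := by
      apply mul_lt_mul_of_pos_left _ (by positivity)
      exact Real.exp_lt_exp.mpr hmlt
    have e3 : lam₁ / T₁ * Real.exp (-m₀ * (T₁' / T₁)) ≤ lam₁ / T₁ * Real.exp (-m * (T₁' / T₁)) := by
      apply mul_le_mul_of_nonneg_left _ (by positivity)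
      exact Real.exp_le_exp.mpr (by nlinarith)
    have e4 : lam₁ / T₁ * Real.exp (-m * (T₁' / T₁)) ≤ lam₁ / T₁ * Real.exp (-m * b) := by
      apply mul_le_mul_of_nonneg_left _ (by positivity)
      exact Real.exp_le_exp.mpr (by nlinarith)
    have chain : lam₁' / T₁' * Real.exp (m * a) < lam₁ / T₁ * Real.exp (-m * b) := by
      calc lam₁' / T₁' * Real.exp (m * a) ≤ lam₁' / T₁' * Real.exp m := e1
        _ < lam₁' / T₁' * Real.exp m₀ := e2
        _ = lam₁ / T₁ * Real.exp (-m₀ * (T₁' / T₁)) := hkey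
        _ ≤ lam₁ / T₁ * Real.exp (-m * (T₁' / T₁)) := e3
        _ ≤ lam₁ / T₁ * Real.exp (-m * b) := e4
    have : lam₂' * (Real.exp (m * a) * a) + lam₂ * (Real.exp (-m * b) * (-b))
        = T₁' * (lam₁' / T₁' * Real.exp (m * a) - lam₁ / T₁ * Real.exp (-m * b)) := by
      have h1 : lam₂' * (Real.exp (m * a) * a) = lam₂' * a * Real.exp (m * a) := by ring
      have h2 : lam₂ * (Real.exp (-m * b) * (-b)) = -(lam₂ * b * Real.exp (-m * b)) := by ring
      rw [h1, h2, hca, hcb]; ring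
    rw [this]
    have : lam₁' / T₁' * Real.exp (m * a) - lam₁ / T₁ * Real.exp (-m * b) < 0 := by linarith
    exact mul_neg_of_pos_of_neg hT₁' this
  -- strict anti on [0, m₀]
  have hanti : StrictAntiOn f (Set.Icc 0 m₀) := by
    apply strictAntiOn_of_deriv_neg (convex_Icc 0 m₀)
    · exact Continuous.continuousOn (by fun_prop)
    · simpa [interior_Icc] using hderiv_neg
  have hf0 : f 0 = 0 := by simp [hf]
  have hfm₀ : f m₀ < 0 := by
    have := hanti (Set.left_mem_Icc.mpr hm₀pos.le)
      (Set.right_mem_Icc.mpr hm₀pos.le) hm₀pos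
    rw [hf0] at this; exact this
  -- coefficient of t
  set c : ℝ := lam₂' * Real.exp (m₀ * a) - lam₂ - lam₂' + lam₂ * Real.exp (-m₀ * b) with hc
  have hcneg : c < 0 := by
    have : c = f m₀ := by rw [hc, hf]; ring
    linarith [hfm₀]
  -- conclude
  simp only [hTf]
  have h1 : Tendsto (fun t : ℝ => t * c) atTop atBot :=
    Tendsto.atTop_mul_const_of_neg hcneg tendsto_id
  have h2 : Tendsto (fun t : ℝ => Real.exp (t * c)) atTop (𝓝 0) :=
    Real.tendsto_exp_atBot.comp h1
  have h3 := h2.const_mul (Real.exp (t₁ * (-lam₁ + lam₂ + lam₁ * Real.exp (-m₀ * (T₁' / T₁)) -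
      lam₂ * Real.exp (-m₀ * b))) *
    Real.exp (t₁' * (lam₁' * Real.exp m₀ - lam₂' * Real.exp (m₀ * a) - lam₁' + lam₂')))
  rw [mul_zero] at h3
  exact h3
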